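/- Generic ergodicity of ℓ¹-equivalence: every Borel map h : (0,1)^ℕ → ℝ such that h s = h t whenever s − t ∈ ℓ¹ is constant on a comeager subset of (0,1)^ℕ. -/

import Mathlib

open Set Filter Topology

noncomputable def iooShift : Set.Ioo (-1:ℝ) 1 ≃o Set.Ioo (0:ℝ) 1 where
  toFun x := ⟨((x:ℝ)+1)/2, by
    obtain ⟨h1, h2⟩ := x.2; constructor <;> linarith⟩
  invFun y := ⟨2*(y:ℝ)-1, by
    obtain ⟨h1, h2⟩ := y.2; constructor <;> linarith⟩
  left_inv x := by ext; ring
  right_inv y := by ext; ring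
  map_rel_iff' := by
    intro a b
    simp only [Equiv.coe_fn_mk, Subtype.mk_le_mk, ← Subtype.coe_le_coe]
    constructor <;> intro h <;> linarith

noncomputable def iooHomeoReal : Set.Ioo (0:ℝ) 1 ≃ₜ ℝ :=
  letI : Set.OrdConnected (Set.Ioo (-1:ℝ) 1) := Set.ordConnected_Ioo
  letI : Set.OrdConnected (Set.Ioo (0:ℝ) 1) := Set.ordConnected_Ioo
  ((orderIsoIooNegOneOne ℝ).trans iooShift).toHomeomorph.symm

/-- Topological zero-one law: a Baire measurable subset of `ℝ^ℕ` invariant under all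
finitely supported translations is meager or comeager. -/
theorem zero_one_law {A : Set (ℕ → ℝ)} (hA : BaireMeasurableSet A)
    (hinv : ∀ v : ℕ → ℝ, (∃ F : Finset ℕ, ∀ n ∉ F, v n = 0) →
      (fun x => x + v) ⁻¹' A = A) :
    IsMeagre A ∨ A ∈ residual (ℕ → ℝ) := by
  obtain ⟨U, hUo, hAU⟩ := hA.residualEq_isOpen
  have hG : {y : ℕ → ℝ | (y ∈ A) = (y ∈ U)} ∈ residual _ := hAU
  rcases eq_empty_or_nonempty U with hU | ⟨u, hu⟩
  · left
    rw [IsMeagre]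
    refine mem_of_superset hG ?_
    intro y hy
    simp only [mem_setOf_eq, hU] at hy
    simp only [mem_compl_iff]
    rw [hy]
    exact notMem_empty y
  · right
    -- it suffices to show U is dense
    have hUd : Dense U := by
      rw [dense_iff_inter_open]
      intro W hWo hWne
      by_contra hWU
      rw [Set.not_nonempty_iff_eq_empty] at hWU
      obtain ⟨x, hx⟩ := hWne
      obtain ⟨I, su, hsu, hIU⟩ := isOpen_pi_iff.mp hUo u hu
      obtain ⟨J, sw, hsw, hJW⟩ := isOpen_pi_iff.mp hWo x hx
      set v : ℕ → ℝ := fun n => if n ∈ I ∪ J then x n - u n else 0 with hv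
      have hvfin : ∃ F : Finset ℕ, ∀ n ∉ F, v n = 0 :=
        ⟨I ∪ J, fun n hn => if_neg hn⟩
      set B : Set (ℕ → ℝ) :=
        {y | (∀ n ∈ I, y n ∈ su n) ∧ (∀ n ∈ J, y n + v n ∈ sw n)} with hB
      have hBo : IsOpen B := by
        have hBeq : B = (⋂ n ∈ (I : Set ℕ), (fun y : ℕ → ℝ => y n) ⁻¹' su n) ∩
            (⋂ n ∈ (J : Set ℕ), (fun y : ℕ → ℝ => y n + v n) ⁻¹' sw n) := by
          ext y; simp [hB]
        rw [hBeq]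
        apply IsOpen.inter
        · exact I.finite_toSet.isOpen_biInter fun n hn =>
            ((hsu n hn).1).preimage (continuous_apply n)
        · exact J.finite_toSet.isOpen_biInter fun n hn =>
            ((hsw n hn).1).preimage ((continuous_apply n).add continuous_const)
      have huB : u ∈ B := by
        constructor
        · exact fun n hn => (hsu n hn).2
        · intro n hn
          have : v n = x n - u n := by simp [hv, Finset.mem_union, hn]
          rw [this]
          simpa using (hsw n hn).2
      have hBU : B ⊆ U := fun y hy => hIU fun n hn => hy.1 n hn
      -- W ∩ A is meager
      have hWA : IsMeagre (W ∩ A) := by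
        refine (fun hs hts => IsMeagre.mono hts hs) ?_ (show W ∩ A ⊆ {y : ℕ → ℝ | (y ∈ A) = (y ∈ U)}ᶜ from ?_)
        · rw [IsMeagre, compl_compl]; exact hG
        · rintro y ⟨hyW, hyA⟩ hy
          simp only [mem_setOf_eq] at hy
          have hyU : y ∈ U := by rw [← hy]; exact hyA
          exact absurd (mem_inter hyW hyU) (by rw [hWU]; exact notMem_empty y)
      -- B ∩ A maps into W ∩ A under translation by v
      have hBA : B ∩ A ⊆ (fun y => y + v) ⁻¹' (W ∩ A) := by
        rintro y ⟨hyB, hyA⟩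
        constructor
        · apply hJW
          intro n hn
          exact hyB.2 n hn
        · rw [← hinv v hvfin] at hyA
          exact hyA
      have hBAm : IsMeagre (B ∩ A) :=
        (hWA.preimage_of_isOpenMap (continuous_id.add continuous_const)
          (Homeomorph.addRight v).isOpenMap).mono hBA
      -- but B ∩ A is nonmeager since B is nonempty open and B ⊆ U
      have hBdiff : IsMeagre (B \ A) := by
        refine (fun hs hts => IsMeagre.mono hts hs) ?_ (show B \ A ⊆ {y : ℕ → ℝ | (y ∈ A) = (y ∈ U)}ᶜ from ?_)
        · rw [IsMeagre, compl_compl]; exact hG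
        · rintro y ⟨hyB, hyA⟩ hy
          simp only [mem_setOf_eq] at hy
          exact hyA (by rw [hy]; exact hBU hyB)
      have hBm : IsMeagre B := by
        have : B = (B ∩ A) ∪ (B \ A) := (inter_union_diff B A).symm
        rw [this, IsMeagre, compl_union]
        exact inter_mem hBAm hBdiff
      have := dense_of_mem_residual hBm
      obtain ⟨y, hy1, hy2⟩ := this.inter_open_nonempty B hBo ⟨u, huB⟩
      exact hy2 hy1
    exact mem_of_superset (inter_mem (residual_of_dense_open hUo hUd) hG)
      (fun y ⟨hyU, hy⟩ => by rw [mem_setOf_eq] at hy; rw [hy]; exact hyU)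

/-- Generic ergodicity of `ℓ¹`-equivalence on `(0,1)^ℕ`: every Borel map
`h : (0,1)^ℕ → ℝ` which is invariant under `ℓ¹`-differences is constant on a comeager set. -/
theorem stmt_11 (h : (ℕ → Set.Ioo (0 : ℝ) 1) → ℝ) (hm : Measurable h)
    (hinv : ∀ s t : ℕ → Set.Ioo (0 : ℝ) 1,
      Summable (fun n => |(s n : ℝ) - (t n : ℝ)|) → h s = h t) :
    ∃ C ∈ residual (ℕ → Set.Ioo (0 : ℝ) 1), ∃ c : ℝ, ∀ x ∈ C, h x = c := by
  classical
  -- transfer everything to ℝ^ℕ via the coordinatewise homeomorphism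
  set E : (ℕ → Set.Ioo (0:ℝ) 1) ≃ₜ (ℕ → ℝ) :=
    Homeomorph.piCongrRight fun _ => iooHomeoReal with hE
  set h' : (ℕ → ℝ) → ℝ := h ∘ E.symm with hh'
  have hm' : Measurable h' := hm.comp E.symm.continuous.measurable
  -- invariance of h' under finitely supported translations
  have hinv' : ∀ (v : ℕ → ℝ), (∃ F : Finset ℕ, ∀ n ∉ F, v n = 0) →
      ∀ x : ℕ → ℝ, h' (x + v) = h' x := by
    rintro v ⟨F, hF⟩ x
    apply hinv
    apply summable_of_ne_finset_zero (s := F)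
    intro n hn
    have hvx : (x + v) n = x n := by simp [hF n hn]
    have : E.symm (x + v) n = E.symm x n := by
      simp only [hE, Homeomorph.piCongrRight_symm]
      show iooHomeoReal.symm ((x + v) n) = iooHomeoReal.symm (x n)
      rw [hvx]
    rw [this, sub_self, abs_zero]
  -- the sublevel sets
  set A : ℚ → Set (ℕ → ℝ) := fun q => {x | h' x < q} with hA
  have hdich : ∀ q : ℚ, IsMeagre (A q) ∨ A q ∈ residual (ℕ → ℝ) := by
    intro q
    apply zero_one_law
    · exact (measurableSet_lt hm' measurable_const).baireMeasurableSet
    · rintro v hv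
      ext x
      simp only [Set.mem_preimage, hA, Set.mem_setOf_eq, hinv' v hv x]
  set S : Set ℚ := {q | A q ∈ residual (ℕ → ℝ)} with hS
  -- some q₀ is not in S
  have hq0 : ∃ q₀ : ℚ, q₀ ∉ S := by
    by_contra hc
    push_neg at hc
    have : (⋂ q : ℚ, A q) ∈ residual (ℕ → ℝ) :=
      (countable_iInter_mem).mpr hc
    obtain ⟨x, hx⟩ := (dense_of_mem_residual this).nonempty
    obtain ⟨q, hq⟩ := exists_rat_lt (h' x)
    exact absurd (Set.mem_iInter.mp hx q) (by simp [hA]; linarith)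
  obtain ⟨q₀, hq₀⟩ := hq0
  -- S is nonempty
  have hSne : S.Nonempty := by
    by_contra hc
    rw [Set.not_nonempty_iff_eq_empty] at hc
    have hall : ∀ q : ℚ, IsMeagre (A q) := by
      intro q
      rcases hdich q with h1 | h1
      · exact h1
      · exact absurd (show q ∈ S from h1) (by simp [hc])
    have huniv : (Set.univ : Set (ℕ → ℝ)) ⊆ ⋃ q : ℚ, A q := by
      intro x _
      obtain ⟨q, hq⟩ := exists_rat_gt (h' x)
      exact Set.mem_iUnion.mpr ⟨q, hq⟩
    have : IsMeagre (Set.univ : Set (ℕ → ℝ)) := by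
      obtain ⟨e⟩ : Nonempty (ℚ ≃ ℕ) := ⟨(Denumerable.eqv ℚ)⟩
      have := isMeagre_iUnion (fun n => hall (e.symm n))
      apply this.mono
      refine huniv.trans ?_
      intro x hx
      obtain ⟨q, hq⟩ := Set.mem_iUnion.mp hx
      exact Set.mem_iUnion.mpr ⟨e q, by simpa using hq⟩
    obtain ⟨x, hx⟩ := (dense_of_mem_residual this).nonempty
    exact hx (Set.mem_univ x)
  -- S is upward closed, so q₀ is a lower bound
  have hup : ∀ q ∈ S, ∀ q' : ℚ, q ≤ q' → q' ∈ S := by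
    intro q hq q' hqq'
    have hq' : A q ∈ residual (ℕ → ℝ) := hq
    exact mem_of_superset hq' (fun x hx => by
      simp only [hA, Set.mem_setOf_eq] at *
      calc h' x < (q:ℝ) := hx
        _ ≤ q' := by exact_mod_cast hqq')
  have hlb : ∀ q ∈ S, (q₀ : ℝ) ≤ q := by
    intro q hq
    by_contra hlt
    push_neg at hlt
    exact hq₀ (hup q hq q₀ (by exact_mod_cast hlt.le))
  -- the constant
  set c : ℝ := sInf ((↑) '' S : Set ℝ) with hc
  have hSne' : ((↑) '' S : Set ℝ).Nonempty := hSne.image _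
  have hSbdd : BddBelow ((↑) '' S : Set ℝ) := ⟨q₀, by rintro r ⟨q, hq, rfl⟩; exact hlb q hq⟩
  -- the comeager set in ℝ^ℕ
  set D : ℚ → Set (ℕ → ℝ) := fun q => if q ∈ S then A q else (A q)ᶜ with hD
  have hDres : ∀ q : ℚ, D q ∈ residual (ℕ → ℝ) := by
    intro q
    by_cases hq : q ∈ S
    · simp only [hD, if_pos hq]; exact hq
    · simp only [hD, if_neg hq]
      rcases hdich q with h1 | h1
      · exact h1
      · exact absurd h1 hq
  have hCres : (⋂ q : ℚ, D q) ∈ residual (ℕ → ℝ) := countable_iInter_mem.mpr hDres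
  refine ⟨E ⁻¹' (⋂ q : ℚ, D q), ?_, c, ?_⟩
  · have : Filter.Tendsto E (residual _) (residual _) :=
      tendsto_residual_of_isOpenMap E.continuous E.isOpenMap
    exact this hCres
  · intro x hx
    have hx' : ∀ q : ℚ, E x ∈ D q := Set.mem_iInter.mp hx
    have hval : h x = h' (E x) := by simp [hh']
    rw [hval]
    have hle : h' (E x) ≤ c := by
      apply le_csInf hSne'
      rintro r ⟨q, hq, rfl⟩
      have := hx' q
      simp only [hD, if_pos hq, hA, Set.mem_setOf_eq] at this
      exact this.le
    have hge : c ≤ h' (E x) := by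
      by_contra hlt
      push_neg at hlt
      obtain ⟨q, hq1, hq2⟩ := exists_rat_btwn hlt
      have hqS : q ∉ S := by
        intro hqS
        exact absurd (csInf_le hSbdd ⟨q, hqS, rfl⟩) (not_le.mpr hq2)
      have := hx' q
      simp only [hD, if_neg hqS, Set.mem_compl_iff, hA, Set.mem_setOf_eq] at this
      exact this hq1
    linarith
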